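/- For all z in [0, √2], 2Φ(z) - 1 - z(1+z²)(2+z²)φ(z) ≤ 0, where Φ and φ are the standard normal CDF and PDF. -/

import Mathlib

open Real Set Filter Topology MeasureTheory intervalIntegral

noncomputable def phi (y : ℝ) : ℝ := (Real.sqrt (2 * Real.pi))⁻¹ * Real.exp (-y ^ 2 / 2)

noncomputable def Phi (x : ℝ) : ℝ := ∫ y in Set.Iic x, phi y

noncomputable def PhiInv (a : ℝ) : ℝ := Function.invFun Phi a

lemma phi_continuous : Continuous phi := by
  unfold phi
  fun_prop

lemma phi_integrable : Integrable phi := by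
  have h : Integrable (fun x : ℝ => Real.exp (-(1/2 : ℝ) * x ^ 2)) :=
    integrable_exp_neg_mul_sq (by norm_num)
  have := h.const_mul ((Real.sqrt (2 * Real.pi))⁻¹)
  refine this.congr ?_
  filter_upwards with x
  unfold phi
  ring_nf

lemma integral_phi : ∫ y, phi y = 1 := by
  have h : ∫ y : ℝ, Real.exp (-(1/2:ℝ) * y ^ 2) = Real.sqrt (π / (1/2)) :=
    integral_gaussian (1/2)
  unfold phi
  rw [MeasureTheory.integral_const_mul]
  have : (fun y : ℝ => Real.exp (-y ^ 2 / 2)) = fun y : ℝ => Real.exp (-(1/2:ℝ) * y ^ 2) := by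
    funext y; ring_nf
  rw [this, h]
  rw [show π / (1/2 : ℝ) = 2 * π by ring]
  rw [inv_mul_cancel₀]
  positivity

lemma Phi_zero : Phi 0 = 1 / 2 := by
  have hsymm : (∫ y in Set.Iic (0:ℝ), phi y) = ∫ y in Set.Ioi (0:ℝ), phi y := by
    have h1 : (∫ y in Set.Iic (0:ℝ), phi (-y)) = ∫ y in Set.Ioi (-(0:ℝ)), phi y :=
      integral_comp_neg_Iic 0 phi
    rw [neg_zero] at h1
    rw [← h1]
    refine setIntegral_congr_fun measurableSet_Iic ?_
    intro x _
    unfold phi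
    ring_nf
  have hsplit : (∫ y in Set.Iic (0:ℝ), phi y) + ∫ y in Set.Ioi (0:ℝ), phi y = ∫ y, phi y :=
    integral_Iic_add_Ioi phi_integrable.integrableOn phi_integrable.integrableOn
  rw [integral_phi, ← hsymm] at hsplit
  unfold Phi
  linarith

lemma phi_hasDeriv (x : ℝ) : HasDerivAt phi (-x * phi x) x := by
  have h1 : HasDerivAt (fun y : ℝ => -y ^ 2 / 2) (-x) x := by
    have := ((hasDerivAt_pow 2 x).neg).div_const 2
    refine this.congr_deriv ?_
    push_cast
    ring
  have h2 := (h1.exp).const_mul ((Real.sqrt (2 * Real.pi))⁻¹)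
  have h3 : phi = fun y : ℝ => (Real.sqrt (2 * Real.pi))⁻¹ * Real.exp (-y ^ 2 / 2) := rfl
  rw [h3]
  refine h2.congr_deriv ?_
  beta_reduce
  ring

lemma Phi_eq (y : ℝ) : Phi y = Phi 0 + ∫ t in (0:ℝ)..y, phi t := by
  have := integral_Iic_sub_Iic (μ := volume) (f := phi) (a := (0:ℝ)) (b := y)
    phi_integrable.integrableOn phi_integrable.integrableOn
  unfold Phi
  linarith

lemma Phi_hasDeriv (x : ℝ) : HasDerivAt Phi (phi x) x := by
  have h : HasDerivAt (fun u => ∫ t in (0:ℝ)..u, phi t) (phi x) x :=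
    integral_hasDerivAt_right (phi_integrable.intervalIntegrable)
      (phi_continuous.aestronglyMeasurable.stronglyMeasurableAtFilter)
      phi_continuous.continuousAt
  have h2 := h.const_add (Phi 0)
  refine HasDerivAt.congr_of_eventuallyEq h2 ?_
  filter_upwards with y
  exact Phi_eq y

lemma H_hasDeriv (x : ℝ) :
    HasDerivAt (fun z => 2 * Phi z - 1 - z * (1 + z ^ 2) * (2 + z ^ 2) * phi z)
      (x ^ 2 * (x ^ 4 - 2 * x ^ 2 - 7) * phi x) x := by
  have hpoly : HasDerivAt (fun z : ℝ => z * (1 + z ^ 2) * (2 + z ^ 2))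
      (5 * x ^ 4 + 9 * x ^ 2 + 2) x := by
    have : HasDerivAt (fun z : ℝ => z * (1 + z ^ 2) * (2 + z ^ 2))
        ((1 * (1 + x ^ 2) + x * (0 + 2 * x ^ 1)) * (2 + x ^ 2)
          + x * (1 + x ^ 2) * (0 + 2 * x ^ 1)) x := by
      exact (((hasDerivAt_id x).mul ((hasDerivAt_const x 1).add (hasDerivAt_pow 2 x))).mul
        ((hasDerivAt_const x 2).add (hasDerivAt_pow 2 x)))
    convert this using 1
    ring
  have h := ((Phi_hasDeriv x).const_mul 2).sub_const 1
  have h2 := h.sub (hpoly.mul (phi_hasDeriv x))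
  refine h2.congr_deriv ?_
  ring

theorem h_nonpos (z : ℝ) (hz : z ∈ Set.Icc (0 : ℝ) (Real.sqrt 2)) :
    2 * Phi z - 1 - z * (1 + z ^ 2) * (2 + z ^ 2) * phi z ≤ 0 := by
  set H : ℝ → ℝ := fun z => 2 * Phi z - 1 - z * (1 + z ^ 2) * (2 + z ^ 2) * phi z with hH
  have hanti : AntitoneOn H (Set.Icc 0 (Real.sqrt 2)) := by
    apply antitoneOn_of_deriv_nonpos (convex_Icc _ _)
    · exact Continuous.continuousOn (by
        have : ∀ x, HasDerivAt H (x ^ 2 * (x ^ 4 - 2 * x ^ 2 - 7) * phi x) x := H_hasDeriv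
        exact continuous_iff_continuousAt.2 fun x => (this x).continuousAt)
    · intro x hx
      exact ((H_hasDeriv x).differentiableAt).differentiableWithinAt
    · intro x hx
      rw [(H_hasDeriv x).deriv]
      rw [interior_Icc] at hx
      have hx2 : x ^ 2 ≤ 2 := by
        have := hx.2.le
        calc x ^ 2 ≤ (Real.sqrt 2) ^ 2 := by
              apply pow_le_pow_left₀ hx.1.le this 2
            _ = 2 := Real.sq_sqrt (by norm_num)
      have hphi : 0 < phi x := by unfold phi; positivity
      have hx4 : x ^ 4 ≤ 4 := by nlinarith
      have : x ^ 4 - 2 * x ^ 2 - 7 ≤ 0 := by nlinarith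
      have h1 : x ^ 2 * (x ^ 4 - 2 * x ^ 2 - 7) ≤ 0 := by nlinarith [sq_nonneg x]
      exact mul_nonpos_of_nonpos_of_nonneg h1 hphi.le
  have h0 : H 0 = 0 := by
    simp [hH, Phi_zero]
  have := hanti (Set.left_mem_Icc.2 (Real.sqrt_nonneg 2)) hz hz.1
  rw [h0] at this
  exact this
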